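/- For the 4×4 matrix T = [[1,z,z,z],[1,0,0,z],[1,z,0,0],[1,0,z,0]] evaluated at z = -1, the trace of T^L equals 2^{L/2+1} cos(πL/2) + 2 cos(πL/3) for every positive integer L. -/

import Mathlib

/-- The row-to-row transfer matrix `T_3(z)` for the Witten index of the supersymmetric
model on the 3-leg triangular ladder, evaluated at activity `z = -1`. -/
noncomputable def T3neg1 : Matrix (Fin 4) (Fin 4) ℝ :=
  !![1, -1, -1, -1;
     1,  0,  0, -1;
     1, -1,  0,  0;
     1,  0, -1,  0]

noncomputable def gT (n : ℕ) : ℝ := 2 ^ ((n : ℝ) / 2 + 1) * Real.cos (Real.pi * n / 2)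

noncomputable def hT (n : ℕ) : ℝ := 2 * Real.cos (Real.pi * n / 3)

noncomputable def fT (n : ℕ) : ℝ := gT n + hT n

lemma gT_step (n : ℕ) : gT (n + 2) = -2 * gT n := by
  unfold gT
  push_cast
  have h1 : Real.pi * ((n : ℝ) + 2) / 2 = Real.pi * n / 2 + Real.pi := by ring
  have h2 : ((n : ℝ) + 2) / 2 + 1 = ((n : ℝ) / 2 + 1) + 1 := by ring
  rw [h1, h2, Real.cos_add_pi, Real.rpow_add (by norm_num : (0:ℝ) < 2), Real.rpow_one]
  ring

lemma hT_step (n : ℕ) : hT (n + 2) = hT (n + 1) - hT n := by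
  unfold hT
  push_cast
  have h1 : Real.pi * ((n : ℝ) + 2) / 3 = (Real.pi * n / 3 + Real.pi / 3) + Real.pi / 3 := by
    ring
  have h2 : Real.pi * ((n : ℝ) + 1) / 3 = Real.pi * n / 3 + Real.pi / 3 := by ring
  rw [h1, h2, Real.cos_add, Real.cos_add, Real.sin_add, Real.cos_pi_div_three,
    Real.sin_pi_div_three]
  have h3 : Real.sqrt 3 * Real.sqrt 3 = 3 := Real.mul_self_sqrt (by norm_num)
  linear_combination (-(Real.cos (Real.pi * n / 3)) / 2) * h3

lemma fT_rec (n : ℕ) :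
    fT (n + 4) = fT (n + 3) - 3 * fT (n + 2) + 2 * fT (n + 1) - 2 * fT n := by
  have g1 : gT (n + 4) = -2 * gT (n + 2) := gT_step (n + 2)
  have g0 : gT (n + 2) = -2 * gT n := gT_step n
  have g2 : gT (n + 3) = -2 * gT (n + 1) := gT_step (n + 1)
  have h2 : hT (n + 4) = hT (n + 3) - hT (n + 2) := hT_step (n + 2)
  have h1 : hT (n + 3) = hT (n + 2) - hT (n + 1) := hT_step (n + 1)
  have h0 : hT (n + 2) = hT (n + 1) - hT n := hT_step n
  simp only [fT]
  linarith

lemma T3_pow2 : T3neg1 ^ 2 =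
    !![-2, 0, 0, 0; 0, -1, 0, -1; 0, -1, -1, 0; 0, 0, -1, -1] := by
  rw [pow_two]
  ext i j
  fin_cases i <;> fin_cases j <;>
    simp [T3neg1, Matrix.mul_apply, Fin.sum_univ_four, Matrix.vecHead, Matrix.vecTail] <;> norm_num

lemma T3_pow3 : T3neg1 ^ 3 =
    !![-2, 2, 2, 2; -2, 0, 1, 1; -2, 1, 0, 1; -2, 1, 1, 0] := by
  rw [pow_succ, T3_pow2]
  ext i j
  fin_cases i <;> fin_cases j <;>
    simp [T3neg1, Matrix.mul_apply, Fin.sum_univ_four, Matrix.vecHead, Matrix.vecTail] <;> norm_num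

lemma T3_pow4 : T3neg1 ^ 4 =
    !![4, 0, 0, 0; 0, 1, 1, 2; 0, 2, 1, 1; 0, 1, 2, 1] := by
  have h4 : T3neg1 ^ 4 = T3neg1 ^ 3 * T3neg1 := pow_succ _ 3
  rw [h4, T3_pow3]
  ext i j
  fin_cases i <;> fin_cases j <;>
    simp [T3neg1, Matrix.mul_apply, Fin.sum_univ_four, Matrix.vecHead, Matrix.vecTail] <;> norm_num

lemma one_fin_four : (1 : Matrix (Fin 4) (Fin 4) ℝ) =
    !![1,0,0,0; 0,1,0,0; 0,0,1,0; 0,0,0,1] := by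
  ext i j
  fin_cases i <;> fin_cases j <;>
    norm_num [Matrix.one_apply, Fin.ext_iff, Matrix.vecHead, Matrix.vecTail]

set_option maxHeartbeats 1000000 in
lemma T3_CH : T3neg1 ^ 4 =
    T3neg1 ^ 3 - (3:ℝ) • T3neg1 ^ 2 + (2:ℝ) • T3neg1 - (2:ℝ) • 1 := by
  rw [T3_pow4, T3_pow3, T3_pow2, one_fin_four]
  ext i j
  fin_cases i <;> fin_cases j <;>
    norm_num [T3neg1, Matrix.add_apply, Matrix.sub_apply, Matrix.smul_apply,
      smul_eq_mul, Matrix.vecHead, Matrix.vecTail, Matrix.cons_val_two, Matrix.cons_val_three]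

lemma tr_rec (n : ℕ) :
    (T3neg1 ^ (n + 4)).trace = (T3neg1 ^ (n + 3)).trace - 3 * (T3neg1 ^ (n + 2)).trace
      + 2 * (T3neg1 ^ (n + 1)).trace - 2 * (T3neg1 ^ n).trace := by
  have h : T3neg1 ^ (n + 4) = T3neg1 ^ n * T3neg1 ^ 4 := by rw [← pow_add]
  have e3 : T3neg1 ^ n * T3neg1 ^ 3 = T3neg1 ^ (n + 3) := (pow_add _ n 3).symm
  have e2 : T3neg1 ^ n * T3neg1 ^ 2 = T3neg1 ^ (n + 2) := (pow_add _ n 2).symm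
  have e1 : T3neg1 ^ n * T3neg1 = T3neg1 ^ (n + 1) := (pow_succ _ n).symm
  rw [h, T3_CH]
  simp only [mul_sub, mul_add, Matrix.mul_smul, mul_one, e3, e2, e1, Matrix.trace_sub,
    Matrix.trace_add, Matrix.trace_smul, smul_eq_mul]

lemma tr1 : (T3neg1 ^ 1).trace = 1 := by
  rw [pow_one]
  norm_num [T3neg1, Matrix.trace, Matrix.diag, Fin.sum_univ_four, Matrix.vecHead, Matrix.vecTail, Matrix.cons_val_two, Matrix.cons_val_three]

lemma tr2 : (T3neg1 ^ 2).trace = -5 := by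
  rw [T3_pow2]
  norm_num [Matrix.trace, Matrix.diag, Fin.sum_univ_four, Matrix.vecHead, Matrix.vecTail, Matrix.cons_val_two, Matrix.cons_val_three]

lemma tr3 : (T3neg1 ^ 3).trace = -2 := by
  rw [T3_pow3]
  norm_num [Matrix.trace, Matrix.diag, Fin.sum_univ_four, Matrix.vecHead, Matrix.vecTail, Matrix.cons_val_two, Matrix.cons_val_three]

lemma tr4 : (T3neg1 ^ 4).trace = 7 := by
  rw [T3_pow4]
  norm_num [Matrix.trace, Matrix.diag, Fin.sum_univ_four, Matrix.vecHead, Matrix.vecTail, Matrix.cons_val_two, Matrix.cons_val_three]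

lemma fT1 : fT 1 = 1 := by
  unfold fT gT hT
  push_cast
  have h1 : Real.pi * (1:ℝ) / 2 = Real.pi / 2 := by ring
  have h2 : Real.pi * (1:ℝ) / 3 = Real.pi / 3 := by ring
  rw [h1, h2, Real.cos_pi_div_two, Real.cos_pi_div_three]
  ring

lemma fT2 : fT 2 = -5 := by
  unfold fT gT hT
  push_cast
  have h1 : Real.pi * (2:ℝ) / 2 = Real.pi := by ring
  have h2 : Real.pi * (2:ℝ) / 3 = Real.pi - Real.pi / 3 := by ring
  have h3 : ((2:ℝ) / 2 + 1) = ((2:ℕ) : ℝ) := by norm_num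
  rw [h1, h2, h3, Real.cos_pi, Real.cos_pi_sub, Real.cos_pi_div_three,
    Real.rpow_natCast]
  norm_num

lemma fT3 : fT 3 = -2 := by
  unfold fT gT hT
  push_cast
  have h1 : Real.pi * (3:ℝ) / 2 = Real.pi / 2 + Real.pi := by ring
  have h2 : Real.pi * (3:ℝ) / 3 = Real.pi := by ring
  rw [h1, h2, Real.cos_add_pi, Real.cos_pi_div_two, Real.cos_pi]
  ring

lemma fT4 : fT 4 = 7 := by
  unfold fT gT hT
  push_cast
  have h1 : Real.pi * (4:ℝ) / 2 = 2 * Real.pi := by ring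
  have h2 : Real.pi * (4:ℝ) / 3 = Real.pi / 3 + Real.pi := by ring
  have h3 : ((4:ℝ) / 2 + 1) = ((3:ℕ) : ℝ) := by norm_num
  rw [h1, h2, h3, Real.cos_two_pi, Real.cos_add_pi, Real.cos_pi_div_three,
    Real.rpow_natCast]
  norm_num

lemma key : ∀ n : ℕ, (T3neg1 ^ (n + 1)).trace = fT (n + 1) := by
  intro n
  induction n using Nat.strong_induction_on with
  | _ n ih =>
    match n, ih with
    | 0, _ => rw [tr1, fT1]
    | 1, _ => rw [tr2, fT2]
    | 2, _ => rw [tr3, fT3]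
    | 3, _ => rw [tr4, fT4]
    | (m + 4), ih =>
      have e0 : (T3neg1 ^ (m + 1)).trace = fT (m + 1) := ih m (by omega)
      have e1 : (T3neg1 ^ (m + 2)).trace = fT (m + 2) := ih (m + 1) (by omega)
      have e2 : (T3neg1 ^ (m + 3)).trace = fT (m + 3) := ih (m + 2) (by omega)
      have e3 : (T3neg1 ^ (m + 4)).trace = fT (m + 4) := ih (m + 3) (by omega)
      have tr : (T3neg1 ^ (m + 1 + 4)).trace
          = (T3neg1 ^ (m + 4)).trace - 3 * (T3neg1 ^ (m + 3)).trace
            + 2 * (T3neg1 ^ (m + 2)).trace - 2 * (T3neg1 ^ (m + 1)).trace := tr_rec (m + 1)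
      have fr : fT (m + 1 + 4)
          = fT (m + 4) - 3 * fT (m + 3) + 2 * fT (m + 2) - 2 * fT (m + 1) := fT_rec (m + 1)
      show (T3neg1 ^ (m + 1 + 4)).trace = fT (m + 1 + 4)
      rw [tr, fr, e0, e1, e2, e3]

/-- For every positive integer `L`,
`Tr(T_3(-1)^L) = 2^{L/2+1} cos(π L/2) + 2 cos(π L/3)`. -/
theorem trace_T3neg1_pow (L : ℕ) (hL : 0 < L) :
    (T3neg1 ^ L).trace =
      2 ^ ((L : ℝ) / 2 + 1) * Real.cos (Real.pi * L / 2)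
        + 2 * Real.cos (Real.pi * L / 3) := by
  obtain ⟨m, rfl⟩ : ∃ m, L = m + 1 := ⟨L - 1, by omega⟩
  exact key m
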